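/- Let W ∈ ℂ²⊗ℂ²⊗ℂ² be the W-state, the 3-mode tensor W = (e₂⊗e₁⊗e₁ + e₁⊗e₂⊗e₁ + e₁⊗e₁⊗e₂)/√3, where e₁,e₂ is the standard basis of ℂ². Then ‖W‖_{∞,ℂ} = 2/3 and ‖W‖_{1,ℂ} = 3/2. -/

import Mathlib

set_option maxHeartbeats 1000000
noncomputable section


/-- The Euclidean norm of a vector in `𝕜^k`. -/
def vnorm {𝕜 : Type*} [RCLike 𝕜] {k : ℕ} (x : Fin k → 𝕜) : ℝ :=
  Real.sqrt (∑ i, ‖x i‖ ^ 2)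

/-- The rank-one tensor `x₁ ⊗ ⋯ ⊗ x_d` on `𝕜^n`. -/
def rankOne {𝕜 : Type*} [RCLike 𝕜] {d n : ℕ} (x : Fin d → Fin n → 𝕜) :
    (Fin d → Fin n) → 𝕜 :=
  fun i => ∏ j, x j (i j)

/-- The standard inner product `⟨T, Y⟩ = ∑ tᵢ · conj yᵢ` of tensors. -/
def tinner {𝕜 : Type*} [RCLike 𝕜] {d n : ℕ} (T Y : (Fin d → Fin n) → 𝕜) : 𝕜 :=
  ∑ i, T i * (starRingEnd 𝕜) (Y i)

/-- The Hilbert–Schmidt norm of a tensor. -/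
def hsNorm {𝕜 : Type*} [RCLike 𝕜] {d n : ℕ} (T : (Fin d → Fin n) → 𝕜) : ℝ :=
  Real.sqrt (∑ i, ‖T i‖ ^ 2)

/-- The spectral norm of a tensor:
`max {|⟨T, x₁⊗⋯⊗x_d⟩| : ‖x_j‖ = 1 for all j}`. -/
def specNorm {𝕜 : Type*} [RCLike 𝕜] {d n : ℕ} (T : (Fin d → Fin n) → 𝕜) : ℝ :=
  sSup {r : ℝ | ∃ x : Fin d → Fin n → 𝕜, (∀ j, vnorm (x j) = 1) ∧
    r = ‖tinner T (rankOne x)‖}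

/-- The nuclear norm of a tensor:
`min {∑ᵢ ∏ⱼ ‖x_{i,j}‖ : T = ∑ᵢ x_{i,1}⊗⋯⊗x_{i,d}}`. -/
def nucNorm {𝕜 : Type*} [RCLike 𝕜] {d n : ℕ} (T : (Fin d → Fin n) → 𝕜) : ℝ :=
  sInf {r : ℝ | ∃ (m : ℕ) (x : Fin m → Fin d → Fin n → 𝕜),
    T = (∑ i, rankOne (x i)) ∧ r = ∑ i, ∏ j, vnorm (x i j)}

/-- `α(n^{×d}, 𝕜)`. -/
def alphaN (𝕜 : Type*) [RCLike 𝕜] (d n : ℕ) : ℝ :=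
  sSup {r : ℝ | ∃ T : (Fin d → Fin n) → 𝕜, hsNorm T = 1 ∧ r = nucNorm T}

/-- `β(n^{×d}, 𝕜)`. -/
def betaN (𝕜 : Type*) [RCLike 𝕜] (d n : ℕ) : ℝ :=
  sInf {r : ℝ | ∃ T : (Fin d → Fin n) → 𝕜, hsNorm T = 1 ∧ r = specNorm T}

/-- The `W`-state: `W = (e₂⊗e₁⊗e₁ + e₁⊗e₂⊗e₁ + e₁⊗e₁⊗e₂)/√3` on `ℂ²`. -/
def Wstate : (Fin 3 → Fin 2) → ℂ := fun i =>
  if (i 0 = 1 ∧ i 1 = 0 ∧ i 2 = 0) ∨ (i 0 = 0 ∧ i 1 = 1 ∧ i 2 = 0) ∨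
      (i 0 = 0 ∧ i 1 = 0 ∧ i 2 = 1)
  then (Real.sqrt 3 : ℂ)⁻¹ else 0

theorem keysq (a0 a1 b0 b1 c0 c1 : ℝ) :
    3*(a1*b0*c0 + a0*b1*c0 + a0*b0*c1)^2
      ≤ 4*((a0^2+a1^2)*((b0^2+b1^2)*(c0^2+c1^2))) := by
  nlinarith [sq_nonneg (a1*(b1*c0+b0*c1) - a0*(b0*c0)),
    mul_nonneg (by positivity : (0:ℝ) ≤ a0^2+a1^2) (sq_nonneg (b0*c0 - 2*b1*c1)),
    mul_nonneg (by positivity : (0:ℝ) ≤ a0^2+a1^2) (sq_nonneg (b0*c1 - b1*c0)),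
    sq_nonneg (b0*c0 - 2*b1*c1), sq_nonneg (b0*c1 - b1*c0)]

theorem keyabs (a0 a1 b0 b1 c0 c1 : ℝ) (ha0 : 0 ≤ a0) (ha1 : 0 ≤ a1)
    (hb0 : 0 ≤ b0) (hb1 : 0 ≤ b1) (hc0 : 0 ≤ c0) (hc1 : 0 ≤ c1) :
    a1*b0*c0 + a0*b1*c0 + a0*b0*c1 ≤
      2/Real.sqrt 3 * (Real.sqrt (a0^2+a1^2) * (Real.sqrt (b0^2+b1^2) * Real.sqrt (c0^2+c1^2))) := by
  have hs : 0 ≤ a1*b0*c0 + a0*b1*c0 + a0*b0*c1 := by positivity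
  have h1 : (a1*b0*c0 + a0*b1*c0 + a0*b0*c1)^2
      ≤ (2/Real.sqrt 3 * (Real.sqrt (a0^2+a1^2) * (Real.sqrt (b0^2+b1^2) * Real.sqrt (c0^2+c1^2))))^2 := by
    have h3 : (0:ℝ) < Real.sqrt 3 := by positivity
    have := keysq a0 a1 b0 b1 c0 c1
    have e1 : Real.sqrt (a0^2+a1^2)^2 = a0^2+a1^2 := Real.sq_sqrt (by positivity)
    have e2 : Real.sqrt (b0^2+b1^2)^2 = b0^2+b1^2 := Real.sq_sqrt (by positivity)
    have e3 : Real.sqrt (c0^2+c1^2)^2 = c0^2+c1^2 := Real.sq_sqrt (by positivity)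
    have e4 : Real.sqrt 3 ^2 = 3 := Real.sq_sqrt (by norm_num)
    rw [mul_pow, mul_pow, mul_pow, div_pow, e1, e2, e3, e4]
    rw [div_mul_eq_mul_div, le_div_iff₀ (by norm_num)]
    linarith
  calc a1*b0*c0 + a0*b1*c0 + a0*b0*c1 = Real.sqrt ((a1*b0*c0 + a0*b1*c0 + a0*b0*c1)^2) :=
        (Real.sqrt_sq hs).symm
    _ ≤ _ := by
        rw [show (2/Real.sqrt 3 * (Real.sqrt (a0^2+a1^2) * (Real.sqrt (b0^2+b1^2) * Real.sqrt (c0^2+c1^2)))) = Real.sqrt ((2/Real.sqrt 3 * (Real.sqrt (a0^2+a1^2) * (Real.sqrt (b0^2+b1^2) * Real.sqrt (c0^2+c1^2))))^2) from (Real.sqrt_sq (by positivity)).symm]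
        exact Real.sqrt_le_sqrt h1

theorem vnorm2 (x : Fin 2 → ℂ) : vnorm x = Real.sqrt (‖x 0‖^2 + ‖x 1‖^2) := by
  rw [vnorm, Fin.sum_univ_two]

theorem rankOne3 (x : Fin 3 → Fin 2 → ℂ) (a b c : Fin 2) :
    rankOne x ![a,b,c] = x 0 a * (x 1 b * x 2 c) := by
  rw [rankOne, Fin.prod_univ_three]; simp [mul_assoc]

theorem norm_sqrt3_inv : ‖((Real.sqrt 3 : ℝ) : ℂ)⁻¹‖ = (Real.sqrt 3)⁻¹ := by
  rw [norm_inv, Complex.norm_real, Real.norm_eq_abs, abs_of_nonneg (Real.sqrt_nonneg 3)]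

def e3 : (Fin 2 × Fin 2 × Fin 2) ≃ (Fin 3 → Fin 2) where
  toFun p := ![p.1, p.2.1, p.2.2]
  invFun f := (f 0, f 1, f 2)
  left_inv p := rfl
  right_inv f := by funext i; fin_cases i <;> rfl

theorem sum_pi3 {M : Type*} [AddCommMonoid M] (g : (Fin 3 → Fin 2) → M) :
    ∑ f : Fin 3 → Fin 2, g f = ∑ a : Fin 2, ∑ b : Fin 2, ∑ c : Fin 2, g ![a,b,c] := by
  rw [← e3.sum_comp g, Fintype.sum_prod_type]
  simp [Fintype.sum_prod_type, e3]
  rfl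

theorem tinner_W (Y : (Fin 3 → Fin 2) → ℂ) :
    tinner Wstate Y = (Real.sqrt 3 : ℂ)⁻¹ *
      (starRingEnd ℂ) (Y ![1,0,0] + Y ![0,1,0] + Y ![0,0,1]) := by
  rw [tinner, sum_pi3]
  simp [Fin.sum_univ_two, Wstate]
  ring

theorem W_bound (x : Fin 3 → Fin 2 → ℂ) :
    ‖tinner Wstate (rankOne x)‖ ≤ 2/3 * (vnorm (x 0) * (vnorm (x 1) * vnorm (x 2))) := by
  rw [tinner_W, norm_mul, norm_sqrt3_inv, RCLike.norm_conj]
  have hsum : ‖rankOne x ![1,0,0] + rankOne x ![0,1,0] + rankOne x ![0,0,1]‖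
      ≤ ‖x 0 1‖*‖x 1 0‖*‖x 2 0‖ + ‖x 0 0‖*‖x 1 1‖*‖x 2 0‖ + ‖x 0 0‖*‖x 1 0‖*‖x 2 1‖ := by
    refine le_trans (norm_add_le _ _) ?_
    refine add_le_add (le_trans (norm_add_le _ _) (add_le_add ?_ ?_)) ?_ <;>
      rw [rankOne3] <;> rw [norm_mul, norm_mul] <;> rw [mul_assoc]
  have hk := keyabs ‖x 0 0‖ ‖x 0 1‖ ‖x 1 0‖ ‖x 1 1‖ ‖x 2 0‖ ‖x 2 1‖
    (norm_nonneg _) (norm_nonneg _) (norm_nonneg _) (norm_nonneg _) (norm_nonneg _) (norm_nonneg _)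
  rw [vnorm2, vnorm2, vnorm2]
  have h3 : Real.sqrt 3 * Real.sqrt 3 = 3 := Real.mul_self_sqrt (by norm_num)
  have h3pos : (0:ℝ) < Real.sqrt 3 := by positivity
  have : (Real.sqrt 3)⁻¹ * (2/Real.sqrt 3) = 2/3 := by
    field_simp
    rw [sq, h3]
  calc (Real.sqrt 3)⁻¹ * ‖rankOne x ![1,0,0] + rankOne x ![0,1,0] + rankOne x ![0,0,1]‖
      ≤ (Real.sqrt 3)⁻¹ * (2/Real.sqrt 3 * (Real.sqrt (‖x 0 0‖^2+‖x 0 1‖^2) * (Real.sqrt (‖x 1 0‖^2+‖x 1 1‖^2) * Real.sqrt (‖x 2 0‖^2+‖x 2 1‖^2)))) := by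
        refine mul_le_mul_of_nonneg_left (le_trans hsum hk) (by positivity)
    _ = 2/3 * (Real.sqrt (‖x 0 0‖^2+‖x 0 1‖^2) * (Real.sqrt (‖x 1 0‖^2+‖x 1 1‖^2) * Real.sqrt (‖x 2 0‖^2+‖x 2 1‖^2))) := by
        rw [← mul_assoc, this]

theorem spec_W : specNorm Wstate = 2/3 := by
  have h13 : Real.sqrt (1/3) = (Real.sqrt 3)⁻¹ := by
    rw [show (1/3 : ℝ) = 3⁻¹ by norm_num, Real.sqrt_inv]
  have h3 : Real.sqrt 3 * Real.sqrt 3 = 3 := Real.mul_self_sqrt (by norm_num)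
  apply IsGreatest.csSup_eq
  constructor
  · -- membership
    refine ⟨fun _ => ![((Real.sqrt (2/3) : ℝ) : ℂ), ((Real.sqrt (1/3) : ℝ) : ℂ)], fun j => ?_, ?_⟩
    · rw [vnorm2]
      simp only [Matrix.cons_val_zero, Matrix.cons_val_one, Matrix.head_cons, Complex.norm_real,
        Real.norm_eq_abs, sq_abs, Real.sq_sqrt (by norm_num : (0:ℝ) ≤ 2/3),
        Real.sq_sqrt (by norm_num : (0:ℝ) ≤ 1/3)]
      norm_num
    · have hval : tinner Wstate (rankOne (fun _ => ![((Real.sqrt (2/3) : ℝ) : ℂ), ((Real.sqrt (1/3) : ℝ) : ℂ)])) = ((2/3 : ℝ) : ℂ) := by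
        rw [tinner_W, rankOne3, rankOne3, rankOne3]
        simp only [Matrix.cons_val_zero, Matrix.cons_val_one, Matrix.head_cons]
        rw [← Complex.ofReal_mul, ← Complex.ofReal_mul, ← Complex.ofReal_mul,
          ← Complex.ofReal_mul, ← Complex.ofReal_mul, ← Complex.ofReal_mul,
          ← Complex.ofReal_add, ← Complex.ofReal_add, Complex.conj_ofReal,
          ← Complex.ofReal_inv, ← Complex.ofReal_mul]
        congr 1
        have h23 : Real.sqrt (2/3) * Real.sqrt (2/3) = 2/3 := Real.mul_self_sqrt (by norm_num)
        rw [h13]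
        field_simp
        nlinarith [h3, Real.sqrt_nonneg 3]
      rw [hval, Complex.norm_real, Real.norm_eq_abs, abs_of_nonneg (by norm_num)]
  · -- upper bound
    rintro r ⟨x, hx, rfl⟩
    have := W_bound x
    rw [hx 0, hx 1, hx 2] at this
    linarith

theorem tinner_self_W : tinner Wstate Wstate = 1 := by
  rw [tinner_W]
  have h1 : Wstate ![1,0,0] = (Real.sqrt 3 : ℂ)⁻¹ := by simp [Wstate]
  have h2 : Wstate ![0,1,0] = (Real.sqrt 3 : ℂ)⁻¹ := by simp [Wstate]
  have h3 : Wstate ![0,0,1] = (Real.sqrt 3 : ℂ)⁻¹ := by simp [Wstate]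
  rw [h1, h2, h3]
  rw [← Complex.ofReal_inv, ← Complex.ofReal_add, ← Complex.ofReal_add, Complex.conj_ofReal]
  rw [← Complex.ofReal_mul]
  norm_cast
  have h3' : Real.sqrt 3 * Real.sqrt 3 = 3 := Real.mul_self_sqrt (by norm_num)
  have hpos : (0:ℝ) < Real.sqrt 3 := by positivity
  field_simp
  linarith

theorem tinner_sum_left {m : ℕ} (x : Fin m → Fin 3 → Fin 2 → ℂ) (Y : (Fin 3 → Fin 2) → ℂ) :
    tinner (∑ i, rankOne (x i)) Y = ∑ i, tinner (rankOne (x i)) Y := by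
  rw [tinner]
  simp only [Finset.sum_apply, Finset.sum_mul]
  rw [Finset.sum_comm]
  rfl

theorem tinner_conj_symm (T Y : (Fin 3 → Fin 2) → ℂ) :
    tinner T Y = (starRingEnd ℂ) (tinner Y T) := by
  simp [tinner, map_sum, mul_comm]

theorem nuc_lower {m : ℕ} (x : Fin m → Fin 3 → Fin 2 → ℂ)
    (hx : Wstate = ∑ i, rankOne (x i)) :
    3/2 ≤ ∑ i, ∏ j, vnorm (x i j) := by
  have key : (1:ℝ) ≤ ∑ i, 2/3 * ∏ j, vnorm (x i j) := by
    have h1 : ‖tinner Wstate Wstate‖ = 1 := by rw [tinner_self_W]; simp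
    calc (1:ℝ) = ‖tinner Wstate Wstate‖ := h1.symm
      _ = ‖tinner (∑ i, rankOne (x i)) Wstate‖ := by rw [← hx]
      _ = ‖∑ i, tinner (rankOne (x i)) Wstate‖ := by rw [tinner_sum_left]
      _ ≤ ∑ i, ‖tinner (rankOne (x i)) Wstate‖ := norm_sum_le _ _
      _ ≤ ∑ i, 2/3 * ∏ j, vnorm (x i j) := by
          refine Finset.sum_le_sum fun i _ => ?_
          rw [tinner_conj_symm, RCLike.norm_conj]
          have := W_bound (x i)
          rw [Fin.prod_univ_three, mul_assoc]
          exact this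
  rw [← Finset.mul_sum] at key
  linarith

def omg : ℂ := (-1 + (Real.sqrt 3 : ℂ) * Complex.I) / 2

theorem h3C : ((Real.sqrt 3 : ℝ):ℂ) * ((Real.sqrt 3 : ℝ):ℂ) = 3 := by
  rw [← Complex.ofReal_mul, Real.mul_self_sqrt (by norm_num)]; norm_num

theorem omg_sum : 1 + omg + omg^2 = 0 := by
  rw [omg]; ring_nf; rw [Complex.I_sq]; linear_combination (-1/4 : ℂ) * h3C

theorem omg_cube : omg^3 = 1 := by
  linear_combination (omg - 1) * omg_sum

theorem omg_re : omg.re = -1/2 := by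
  simp [omg, Complex.div_re]

theorem omg_im : omg.im = Real.sqrt 3 / 2 := by
  simp [omg, Complex.div_im]

theorem omg_norm : ‖omg‖ = 1 := by
  rw [Complex.norm_def]
  rw [show Complex.normSq omg = 1 by
    rw [Complex.normSq_apply, omg_re, omg_im]
    have := Real.mul_self_sqrt (show (0:ℝ) ≤ 3 by norm_num)
    nlinarith]
  exact Real.sqrt_one

def sR : ℝ := Real.sqrt 2 / (3 * Real.sqrt 3)

def vv : Fin 3 → Fin 2 → ℂ := fun k => ![1, ![1, omg, omg^2] k * ((Real.sqrt 2 : ℝ):ℂ)⁻¹]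

def xw : Fin 3 → Fin 3 → Fin 2 → ℂ := fun k j =>
  if j = 0 then (fun i => (sR : ℂ) * ![1, omg^2, omg^4] k * vv k i) else vv k

theorem h2C : ((Real.sqrt 2 : ℝ):ℂ) * ((Real.sqrt 2 : ℝ):ℂ) = 2 := by
  rw [← Complex.ofReal_mul, Real.mul_self_sqrt (by norm_num)]; norm_num

theorem t2ne : ((Real.sqrt 2 : ℝ):ℂ) ≠ 0 := by
  simp [Real.sqrt_eq_zero']

theorem t3ne : ((Real.sqrt 3 : ℝ):ℂ) ≠ 0 := by
  simp [Real.sqrt_eq_zero']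

theorem hsC : (sR : ℂ) * (3 * ((Real.sqrt 3 : ℝ):ℂ)) = ((Real.sqrt 2 : ℝ):ℂ) := by
  rw [sR]
  push_cast
  field_simp

theorem decomp_entry (a b c : Fin 2) :
    ∑ k : Fin 3, rankOne (xw k) ![a,b,c] = Wstate ![a,b,c] := by
  have e : ∀ (k : Fin 3) (a b c : Fin 2), rankOne (xw k) ![a,b,c]
      = ((sR : ℂ) * ![1, omg^2, omg^4] k * vv k a) * (vv k b * vv k c) := by
    intro k a b c
    rw [rankOne, Fin.prod_univ_three]
    simp [xw, mul_assoc]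
  rw [Fin.sum_univ_three, e, e, e]
  fin_cases a <;> fin_cases b <;> fin_cases c
  · simp [vv, Wstate]
    try field_simp [t2ne, t3ne]
    linear_combination (sR:ℂ) * omg_sum + ((sR:ℂ) * omg) * omg_cube
  · simp [vv, Wstate]
    try field_simp [t2ne, t3ne]
    linear_combination ((sR:ℂ) * (omg^3+2) * ((Real.sqrt 3 : ℝ):ℂ)) * omg_cube + hsC
  · simp [vv, Wstate]
    try field_simp [t2ne, t3ne]
    linear_combination ((sR:ℂ) * (omg^3+2) * ((Real.sqrt 3 : ℝ):ℂ)) * omg_cube + hsC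
  · simp [vv, Wstate]
    try field_simp [t2ne, t3ne]
    linear_combination (sR:ℂ) * omg_sum + ((sR:ℂ) * (omg + omg^2*(omg^3+1))) * omg_cube
  · simp [vv, Wstate]
    try field_simp [t2ne, t3ne]
    linear_combination ((sR:ℂ) * (omg^3+2) * ((Real.sqrt 3 : ℝ):ℂ)) * omg_cube + hsC
  · simp [vv, Wstate]
    try field_simp [t2ne, t3ne]
    linear_combination (sR:ℂ) * omg_sum + ((sR:ℂ) * (omg + omg^2*(omg^3+1))) * omg_cube
  · simp [vv, Wstate]
    try field_simp [t2ne, t3ne]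
    linear_combination (sR:ℂ) * omg_sum + ((sR:ℂ) * (omg + omg^2*(omg^3+1))) * omg_cube
  · simp [vv, Wstate]
    try field_simp [t2ne, t3ne]
    linear_combination (sR:ℂ) * omg_sum + ((sR:ℂ) * (omg^2 + omg*(omg^6+omg^3+1))) * omg_cube

theorem sR_nonneg : 0 ≤ sR := by rw [sR]; positivity

theorem norm_q : ‖((Real.sqrt 2 : ℝ):ℂ)⁻¹‖ = (Real.sqrt 2)⁻¹ := by
  rw [norm_inv, Complex.norm_real, Real.norm_eq_abs, abs_of_nonneg (Real.sqrt_nonneg 2)]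

theorem norm_sR : ‖((sR : ℝ):ℂ)‖ = sR := by
  rw [Complex.norm_real, Real.norm_eq_abs, abs_of_nonneg sR_nonneg]

theorem half_inv_sq : ((Real.sqrt 2)⁻¹)^2 = 1/2 := by
  rw [inv_pow, Real.sq_sqrt (by norm_num : (0:ℝ) ≤ 2)]; norm_num

theorem omg_abs : ‖omg‖ = 1 := by
  exact omg_norm

theorem vnorm_vv (k : Fin 3) : vnorm (vv k) = Real.sqrt (3/2) := by
  have hu : ‖(![1, omg, omg^2] : Fin 3 → ℂ) k‖ = 1 := by
    fin_cases k <;> simp [omg_abs, map_pow]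
  rw [vnorm2]
  simp only [vv, Matrix.cons_val_zero, Matrix.cons_val_one, Matrix.head_cons, norm_mul, norm_one,
    hu, norm_q, one_mul, mul_pow, one_pow, half_inv_sq]
  norm_num [show (1:ℝ)+1/2 = 3/2 by norm_num]

theorem vnorm_xw0 (k : Fin 3) : vnorm (xw k 0) = sR * Real.sqrt (3/2) := by
  have hu2 : ‖(![1, omg^2, omg^4] : Fin 3 → ℂ) k‖ = 1 := by
    fin_cases k <;> simp [omg_abs, map_pow]
  have hu : ‖(![1, omg, omg^2] : Fin 3 → ℂ) k‖ = 1 := by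
    fin_cases k <;> simp [omg_abs, map_pow]
  rw [show xw k 0 = fun i => (sR : ℂ) * ![1, omg^2, omg^4] k * vv k i from rfl, vnorm2]
  simp only [vv, Matrix.cons_val_zero, Matrix.cons_val_one, Matrix.head_cons, norm_mul, norm_one,
    hu, hu2, norm_q, norm_sR, one_mul, mul_one, mul_pow, one_pow, half_inv_sq]
  rw [show sR^2 + sR^2*(1/2) = sR^2 * (3/2) by ring, Real.sqrt_mul (sq_nonneg sR),
    Real.sqrt_sq sR_nonneg]

theorem cost_xw : ∑ k : Fin 3, ∏ j : Fin 3, vnorm (xw k j) = 3/2 := by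
  have hj : ∀ k : Fin 3, ∏ j : Fin 3, vnorm (xw k j)
      = vnorm (xw k 0) * (vnorm (xw k 1) * vnorm (xw k 2)) := by
    intro k; rw [Fin.prod_univ_three, mul_assoc]
  have h12 : ∀ k : Fin 3, xw k 1 = vv k := fun k => rfl
  have h22 : ∀ k : Fin 3, xw k 2 = vv k := fun k => rfl
  have hk : ∀ k : Fin 3, ∏ j : Fin 3, vnorm (xw k j) = sR * Real.sqrt (3/2) * (Real.sqrt (3/2) * Real.sqrt (3/2)) := by
    intro k; rw [hj, h12, h22, vnorm_xw0, vnorm_vv]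
  rw [Fin.sum_univ_three, hk, hk, hk]
  have h32 : Real.sqrt (3/2) * Real.sqrt (3/2) = 3/2 := Real.mul_self_sqrt (by norm_num)
  rw [h32, sR]
  have h2 : Real.sqrt 2 * Real.sqrt 2 = 2 := Real.mul_self_sqrt (by norm_num)
  have h3 : Real.sqrt 3 * Real.sqrt 3 = 3 := Real.mul_self_sqrt (by norm_num)
  have h2ne : Real.sqrt 2 ≠ 0 := by positivity
  have h3ne : Real.sqrt 3 ≠ 0 := by positivity
  have h32' : Real.sqrt (3/2) = Real.sqrt 3 / Real.sqrt 2 :=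
    Real.sqrt_div (by norm_num) 2
  rw [h32']
  field_simp
  ring

theorem decomp_W : Wstate = ∑ k : Fin 3, rankOne (xw k) := by
  funext f
  have hf : f = ![f 0, f 1, f 2] := by funext i; fin_cases i <;> rfl
  rw [hf, Finset.sum_apply]
  exact (decomp_entry (f 0) (f 1) (f 2)).symm

theorem nuc_W : nucNorm Wstate = 3/2 := by
  apply IsLeast.csInf_eq
  constructor
  · exact ⟨3, xw, decomp_W, cost_xw.symm⟩
  · rintro r ⟨m, x, hx, rfl⟩
    exact nuc_lower x hx

/-- `‖W‖_∞ = 2/3` and `‖W‖₁ = 3/2`. -/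
theorem stmt15 : specNorm Wstate = 2 / 3 ∧ nucNorm Wstate = 3 / 2 := ⟨spec_W, nuc_W⟩
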